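/- For any real r, c̄ > 0, and μ > 0, the minimum over w ∈ [0,1] of w·r² + μ(1−w)c̄²/(μ+w) equals the GNC surrogate ρ^μ_{c̄}(r), which is r² if r² ≤ (μ/(μ+1))c̄², equals 2c̄|r|√(μ(μ+1)) − μ(c̄² + r²) if (μ/(μ+1))c̄² ≤ r² ≤ ((μ+1)/μ)c̄², and equals c̄² if r² ≥ ((μ+1)/μ)c̄². The minimizer w* equals 1 in the first regime, (c̄/|r|)√(μ(μ+1)) − μ in the middle regime, and 0 in the last regime. -/

import Mathlib

open Set

set_option maxHeartbeats 1000000 in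
/-- Black–Rangarajan duality for the GNC surrogate of TLS. The minimum
over `w ∈ [0,1]` of `w r² + μ(1−w)cbar²/(μ+w)` equals the piecewise GNC surrogate
`ρ^μ_{cbar}(r)`, attained at the stated closed-form minimizer `w*`. -/
theorem gnc_black_rangarajan (r cbar μ : ℝ) (hc : 0 < cbar) (hμ : 0 < μ) :
    let g : ℝ → ℝ := fun w => w * r ^ 2 + μ * (1 - w) * cbar ^ 2 / (μ + w)
    let ρ : ℝ :=
      if r ^ 2 ≤ μ / (μ + 1) * cbar ^ 2 then r ^ 2
      else if r ^ 2 ≤ (μ + 1) / μ * cbar ^ 2 then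
        2 * cbar * |r| * Real.sqrt (μ * (μ + 1)) - μ * (cbar ^ 2 + r ^ 2)
      else cbar ^ 2
    let wstar : ℝ :=
      if r ^ 2 ≤ μ / (μ + 1) * cbar ^ 2 then 1
      else if r ^ 2 ≤ (μ + 1) / μ * cbar ^ 2 then
        cbar / |r| * Real.sqrt (μ * (μ + 1)) - μ
      else 0
    IsLeast (g '' Icc (0 : ℝ) 1) ρ ∧ wstar ∈ Icc (0 : ℝ) 1 ∧ g wstar = ρ := by
  intro g ρ wstar
  have hμ1 : (0:ℝ) < μ + 1 := by linarith
  have hsq : Real.sqrt (μ * (μ + 1)) ^ 2 = μ * (μ + 1) := Real.sq_sqrt (by positivity)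
  have hsqpos : 0 < Real.sqrt (μ * (μ + 1)) := Real.sqrt_pos.mpr (by positivity)
  set q := Real.sqrt (μ * (μ + 1)) with hqdef
  by_cases h1 : r ^ 2 ≤ μ / (μ + 1) * cbar ^ 2
  · have hρ : ρ = r ^ 2 := if_pos h1
    have hw : wstar = 1 := if_pos h1
    have hmem : wstar ∈ Icc (0:ℝ) 1 := by rw [hw]; exact ⟨zero_le_one, le_refl 1⟩
    have hg : g wstar = ρ := by
      rw [hw, hρ]; simp only [g]; norm_num
    refine ⟨⟨⟨wstar, hmem, hg⟩, ?_⟩, hmem, hg⟩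
    rintro y ⟨w, hwmem, rfl⟩
    have hden : 0 < μ + w := by linarith [hwmem.1]
    have key : g w - ρ = (1 - w) * (μ * cbar ^ 2 - r ^ 2 * (μ + w)) / (μ + w) := by
      rw [hρ]; simp only [g]; field_simp; ring
    have hnum : 0 ≤ μ * cbar ^ 2 - r ^ 2 * (μ + w) := by
      have h1' : r ^ 2 * (μ + 1) ≤ μ * cbar ^ 2 := by
        rw [div_mul_eq_mul_div, le_div_iff₀ hμ1] at h1; linarith
      nlinarith [sq_nonneg r, hwmem.2]
    have h1w : (0:ℝ) ≤ 1 - w := by linarith [hwmem.2]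
    rw [← sub_nonneg, key]
    exact div_nonneg (mul_nonneg h1w hnum) hden.le
  · push_neg at h1
    have hr2pos : 0 < r ^ 2 := lt_of_le_of_lt (by positivity) h1
    have hrpos : 0 < |r| := abs_pos.mpr (by intro h; rw [h] at hr2pos; simp at hr2pos)
    have hrabs : |r| ^ 2 = r ^ 2 := sq_abs r
    by_cases h2 : r ^ 2 ≤ (μ + 1) / μ * cbar ^ 2
    · have hρ : ρ = 2 * cbar * |r| * q - μ * (cbar ^ 2 + r ^ 2) := by
        simp only [ρ, if_neg (not_le.mpr h1), if_pos h2, hqdef]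
      have hw : wstar = cbar / |r| * q - μ := by
        simp only [wstar, if_neg (not_le.mpr h1), if_pos h2, hqdef]
      -- key factorization valid for all w with μ + w > 0
      have key : ∀ w : ℝ, 0 < μ + w →
          g w - ρ = (|r| * (μ + w) - cbar * q) ^ 2 / (μ + w) := by
        intro w hden
        rw [hρ]; simp only [g]
        field_simp
        nlinarith [hsq, hrabs, sq_nonneg (μ + w)]
      -- wstar ∈ [0,1]
      have h2m : μ * r ^ 2 ≤ (μ + 1) * cbar ^ 2 := by
        rw [div_mul_eq_mul_div, le_div_iff₀ hμ] at h2; linarith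
      have h1m : μ * cbar ^ 2 ≤ (μ + 1) * r ^ 2 := by
        rw [div_mul_eq_mul_div, div_lt_iff₀ hμ1] at h1
        nlinarith [h1.le]
      have hq1 : μ * |r| ≤ cbar * q := by
        have hsq' : (μ * |r|) ^ 2 ≤ (cbar * q) ^ 2 := by nlinarith [hsq, hrabs]
        exact (pow_le_pow_iff_left₀ (by positivity) (by positivity) two_ne_zero).mp hsq'
      have hq2 : cbar * q ≤ (μ + 1) * |r| := by
        have hsq' : (cbar * q) ^ 2 ≤ ((μ + 1) * |r|) ^ 2 := by nlinarith [hsq, hrabs]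
        exact (pow_le_pow_iff_left₀ (by positivity) (by positivity) two_ne_zero).mp hsq'
      have hmem : wstar ∈ Icc (0:ℝ) 1 := by
        rw [hw]
        constructor
        · rw [sub_nonneg, div_mul_eq_mul_div, le_div_iff₀ hrpos]; linarith
        · rw [sub_le_iff_le_add, div_mul_eq_mul_div, div_le_iff₀ hrpos]; linarith
      have hdenw : 0 < μ + wstar := by
        have := hmem.1; linarith
      have hg : g wstar = ρ := by
        have hzero : |r| * (μ + wstar) - cbar * q = 0 := by
          rw [hw]; field_simp; ring
        have hk := key wstar hdenw
        rw [hzero] at hk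
        simp only [ne_eq, OfNat.ofNat_ne_zero, not_false_eq_true, zero_pow, zero_div] at hk
        linarith
      refine ⟨⟨⟨wstar, hmem, hg⟩, ?_⟩, hmem, hg⟩
      rintro y ⟨w, hwmem, rfl⟩
      have hden : 0 < μ + w := by linarith [hwmem.1]
      have := key w hden
      have hk := key w hden
      rw [← sub_nonneg, hk]
      exact div_nonneg (sq_nonneg _) hden.le
    · push_neg at h2
      have hρ : ρ = cbar ^ 2 := by
        simp only [ρ]; rw [if_neg (not_le.mpr h1), if_neg (not_le.mpr h2)]
      have hw : wstar = 0 := by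
        simp only [wstar]; rw [if_neg (not_le.mpr h1), if_neg (not_le.mpr h2)]
      have hmem : wstar ∈ Icc (0:ℝ) 1 := by rw [hw]; exact ⟨le_refl 0, zero_le_one⟩
      have hg : g wstar = ρ := by
        rw [hw, hρ]; simp only [g]; field_simp; ring
      refine ⟨⟨⟨wstar, hmem, hg⟩, ?_⟩, hmem, hg⟩
      rintro y ⟨w, hwmem, rfl⟩
      have hden : 0 < μ + w := by linarith [hwmem.1]
      have key : g w - ρ = w * (r ^ 2 * (μ + w) - cbar ^ 2 * (μ + 1)) / (μ + w) := by
        rw [hρ]; simp only [g]; field_simp; ring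
      have h2' : cbar ^ 2 * (μ + 1) ≤ r ^ 2 * μ := by
        rw [div_mul_eq_mul_div, div_lt_iff₀ hμ] at h2
        linarith [h2.le]
      have hnum : 0 ≤ r ^ 2 * (μ + w) - cbar ^ 2 * (μ + 1) := by
        have hrw := mul_nonneg (sq_nonneg r) hwmem.1
        linarith [hrw]
      rw [← sub_nonneg, key]
      exact div_nonneg (mul_nonneg hwmem.1 hnum) hden.le
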